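/- Let A, B be unital algebras over ℂ, M an (A,B)-bimodule, N a (B,A)-bimodule, and U = [[A, M],[N, B]] a generalized matrix algebra (arising from a Morita context). Let m, n be positive integers with m ≠ n, and let δ : U → U be an (m,n)-Jordan derivable mapping at zero with δ(1) = 0. If M is faithful as a left A-module and faithful as a right B-module, then δ = 0. -/
import Mathlib


set_option linter.unusedSectionVars false

open MulOpposite

/-- A Morita context: bimodule pairings `Φ : M ⊗_B N → A` and `Ψ : N ⊗_A M → B`
making `[[A, M],[N, B]]` an associative (generalized matrix) algebra. -/
class MoritaContext (A B : outParam Type*) (M N : Type*) [Ring A] [Ring B]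
    [AddCommGroup M] [Module A M] [Module Bᵐᵒᵖ M] [SMulCommClass A Bᵐᵒᵖ M]
    [AddCommGroup N] [Module B N] [Module Aᵐᵒᵖ N] [SMulCommClass B Aᵐᵒᵖ N] where
  Φ : M →+ N →+ A
  Ψ : N →+ M →+ B
  Φ_smul_left : ∀ (a : A) (x : M) (y : N), Φ (a • x) y = a * Φ x y
  Φ_smul_right : ∀ (a : A) (x : M) (y : N), Φ x (op a • y) = Φ x y * a
  Φ_balanced : ∀ (b : B) (x : M) (y : N), Φ (op b • x) y = Φ x (b • y)
  Ψ_smul_left : ∀ (b : B) (y : N) (x : M), Ψ (b • y) x = b * Ψ y x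
  Ψ_smul_right : ∀ (b : B) (y : N) (x : M), Ψ y (op b • x) = Ψ y x * b
  Ψ_balanced : ∀ (a : A) (y : N) (x : M), Ψ (op a • y) x = Ψ y (a • x)
  assoc₁ : ∀ (x : M) (y : N) (x' : M), Φ x y • x' = op (Ψ y x') • x
  assoc₂ : ∀ (y : N) (x : M) (y' : N), Ψ y x • y' = op (Φ x y') • y

/-- The generalized matrix algebra `[[A, M],[N, B]]`, realized on the underlying
set `A × M × N × B`. -/
abbrev GMA (A B M N : Type*) := A × M × N × B

namespace GMA

variable {A B M N : Type*} [Ring A] [Ring B]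
  [AddCommGroup M] [Module A M] [Module Bᵐᵒᵖ M] [SMulCommClass A Bᵐᵒᵖ M]
  [AddCommGroup N] [Module B N] [Module Aᵐᵒᵖ N] [SMulCommClass B Aᵐᵒᵖ N]
  [MoritaContext A B M N]

/-- The pairing `M × N → A`. -/
abbrev φ (x : M) (y : N) : A := MoritaContext.Φ (B := B) x y

/-- The pairing `N × M → B`. -/
abbrev ψ (y : N) (x : M) : B := MoritaContext.Ψ (A := A) y x

lemma φ_add_left (x x' : M) (y : N) : φ (A := A) (B := B) (x + x') y = φ x y + φ x' y := by
  simp [φ]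

lemma φ_add_right (x : M) (y y' : N) : φ (A := A) (B := B) x (y + y') = φ x y + φ x y' := by
  simp [φ]

lemma ψ_add_left (y y' : N) (x : M) : ψ (A := A) (B := B) (y + y') x = ψ y x + ψ y' x := by
  simp [ψ]

lemma ψ_add_right (y : N) (x x' : M) : ψ (A := A) (B := B) y (x + x') = ψ y x + ψ y x' := by
  simp [ψ]

lemma φ_zero_left (y : N) : φ (A := A) (B := B) (0 : M) y = 0 := by simp [φ]
lemma φ_zero_right (x : M) : φ (A := A) (B := B) x (0 : N) = 0 := by simp [φ]
lemma ψ_zero_left (x : M) : ψ (A := A) (B := B) (0 : N) x = 0 := by simp [ψ]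
lemma ψ_zero_right (y : N) : ψ (A := A) (B := B) y (0 : M) = 0 := by simp [ψ]

lemma φ_smul_left (a : A) (x : M) (y : N) : φ (B := B) (a • x) y = a * φ x y :=
  MoritaContext.Φ_smul_left a x y
lemma φ_smul_right (a : A) (x : M) (y : N) : φ (B := B) x (op a • y) = φ x y * a :=
  MoritaContext.Φ_smul_right a x y
lemma φ_balanced (b : B) (x : M) (y : N) : φ (A := A) (op b • x) y = φ x (b • y) :=
  MoritaContext.Φ_balanced b x y
lemma ψ_smul_left (b : B) (y : N) (x : M) : ψ (A := A) (b • y) x = b * ψ y x :=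
  MoritaContext.Ψ_smul_left b y x
lemma ψ_smul_right (b : B) (y : N) (x : M) : ψ (A := A) y (op b • x) = ψ y x * b :=
  MoritaContext.Ψ_smul_right b y x
lemma ψ_balanced (a : A) (y : N) (x : M) : ψ (B := B) (op a • y) x = ψ y (a • x) :=
  MoritaContext.Ψ_balanced a y x
lemma assoc₁ (x : M) (y : N) (x' : M) : φ (B := B) x y • x' = op (ψ (A := A) y x') • x :=
  MoritaContext.assoc₁ x y x'
lemma assoc₂ (y : N) (x : M) (y' : N) : ψ (A := A) y x • y' = op (φ (B := B) x y') • y :=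
  MoritaContext.assoc₂ y x y'

instance : Mul (GMA A B M N) :=
  ⟨fun p q =>
    (p.1 * q.1 + φ p.2.1 q.2.2.1,
     p.1 • q.2.1 + op q.2.2.2 • p.2.1,
     op q.1 • p.2.2.1 + p.2.2.2 • q.2.2.1,
     p.2.2.2 * q.2.2.2 + ψ p.2.2.1 q.2.1)⟩

instance : One (GMA A B M N) := ⟨((1 : A), (0 : M), (0 : N), (1 : B))⟩

@[simp] lemma mul_def (p q : GMA A B M N) :
    p * q =
      (p.1 * q.1 + φ p.2.1 q.2.2.1,
       p.1 • q.2.1 + op q.2.2.2 • p.2.1,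
       op q.1 • p.2.2.1 + p.2.2.2 • q.2.2.1,
       p.2.2.2 * q.2.2.2 + ψ p.2.2.1 q.2.1) := rfl

@[simp] lemma one_def : (1 : GMA A B M N) = ((1 : A), (0 : M), (0 : N), (1 : B)) := rfl

instance instRing : Ring (GMA A B M N) :=
  { (inferInstance : AddCommGroup (GMA A B M N)) with
    left_distrib := by
      rintro ⟨a₁, x₁, y₁, b₁⟩ ⟨a₂, x₂, y₂, b₂⟩ ⟨a₃, x₃, y₃, b₃⟩
      simp [Prod.ext_iff, Prod.add_def, mul_add, smul_add, add_smul,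
        φ_add_right, ψ_add_right]
      refine ⟨by abel, by abel, by abel, by abel⟩
    right_distrib := by
      rintro ⟨a₁, x₁, y₁, b₁⟩ ⟨a₂, x₂, y₂, b₂⟩ ⟨a₃, x₃, y₃, b₃⟩
      simp [Prod.ext_iff, Prod.add_def, add_mul, smul_add, add_smul,
        φ_add_left, ψ_add_left]
      refine ⟨by abel, by abel, by abel, by abel⟩
    zero_mul := by
      rintro ⟨a, x, y, b⟩
      simp [Prod.ext_iff, φ_zero_left, ψ_zero_left]
    mul_zero := by
      rintro ⟨a, x, y, b⟩
      simp [Prod.ext_iff, φ_zero_right, ψ_zero_right]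
    mul_assoc := by
      rintro ⟨a₁, x₁, y₁, b₁⟩ ⟨a₂, x₂, y₂, b₂⟩ ⟨a₃, x₃, y₃, b₃⟩
      simp only [mul_def, Prod.ext_iff]
      refine ⟨?_, ?_, ?_, ?_⟩
      · simp [add_mul, mul_add, mul_assoc, φ_add_left, φ_add_right,
          φ_smul_left, φ_smul_right, φ_balanced]
        abel
      · simp [add_smul, smul_add, mul_smul, assoc₁]
        rw [smul_comm a₁ (op b₃) x₂]
        abel
      · simp [add_smul, smul_add, mul_smul, assoc₂]
        rw [smul_comm b₁ (op a₃) y₂]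
        abel
      · simp [add_mul, mul_add, mul_assoc, ψ_add_left, ψ_add_right,
          ψ_smul_left, ψ_smul_right, ψ_balanced]
        abel
    one_mul := by
      rintro ⟨a, x, y, b⟩
      simp [Prod.ext_iff, φ_zero_left, ψ_zero_left]
    mul_one := by
      rintro ⟨a, x, y, b⟩
      simp [Prod.ext_iff, φ_zero_right, ψ_zero_right]
    }

end GMA


section Helpers

variable {V : Type*} [AddCommGroup V] [Module ℂ V]

lemma csmul_cancel₀ {c : ℂ} (hc : c ≠ 0) {v : V} (h : c • v = 0) : v = 0 := by
  have h2 : c⁻¹ • c • v = (0 : V) := by rw [h, smul_zero]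
  rwa [smul_smul, inv_mul_cancel₀ hc, one_smul] at h2

end Helpers

/-- Let `U = [[A, M],[N, B]]` be a generalized matrix algebra
(arising from a Morita context) over `ℂ`, with `M` faithful as a left `A`-module
and as a right `B`-module.  Every `(m,n)`-Jordan derivable mapping at zero
(`0 < m`, `0 < n`, `m ≠ n`) from `U` into itself with `δ 1 = 0` is zero. -/
theorem mn_jordan_derivable_at_zero_generalized_matrix
    {A B M N : Type*} [Ring A] [Algebra ℂ A] [Ring B] [Algebra ℂ B]
    [AddCommGroup M] [Module ℂ M] [Module A M] [Module Bᵐᵒᵖ M]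
    [SMulCommClass A Bᵐᵒᵖ M]
    [AddCommGroup N] [Module ℂ N] [Module B N] [Module Aᵐᵒᵖ N]
    [SMulCommClass B Aᵐᵒᵖ N]
    [MoritaContext A B M N]
    (hfaithL : ∀ a : A, (∀ x : M, a • x = 0) → a = 0)
    (hfaithR : ∀ b : B, (∀ x : M, MulOpposite.op b • x = 0) → b = 0)
    (m n : ℕ) (hm : 0 < m) (hn : 0 < n) (hmn : m ≠ n)
    (δ : GMA A B M N → GMA A B M N)
    (hadd : ∀ p q : GMA A B M N, δ (p + q) = δ p + δ q)
    (hδ1 : δ 1 = 0)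
    (hzero : ∀ X Y : GMA A B M N, X * Y = 0 → Y * X = 0 →
      (m + n) • δ (X * Y + Y * X) =
        (2 * m) • (δ X * Y) + (2 * m) • (δ Y * X)
          + (2 * n) • (X * δ Y) + (2 * n) • (Y * δ X)) :
    ∀ p : GMA A B M N, δ p = 0 := by
  classical
  -- basic facts
  have hδ0 : δ 0 = 0 := by
    have h := hadd 0 0
    rw [add_zero] at h
    exact (left_eq_add.mp h)
  have hneg : ∀ p : GMA A B M N, δ (-p) = -δ p := by
    intro p
    have h := hadd p (-p)
    rw [add_neg_cancel, hδ0] at h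
    exact eq_neg_of_add_eq_zero_right h.symm
  -- the key identity with complex coefficients
  have hG : ∀ X Y : GMA A B M N, X * Y = 0 → Y * X = 0 →
      (2*(m:ℂ)) • (δ X * Y) + (2*(m:ℂ)) • (δ Y * X)
        + (2*(n:ℂ)) • (X * δ Y) + (2*(n:ℂ)) • (Y * δ X) = 0 := by
    intro X Y h1 h2
    have h := hzero X Y h1 h2
    rw [h1, h2, add_zero, hδ0, smul_zero] at h
    have em : (2*(m:ℂ)) = ((2*m : ℕ) : ℂ) := by push_cast; ring
    have en : (2*(n:ℂ)) = ((2*n : ℕ) : ℂ) := by push_cast; ring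
    rw [em, en, Nat.cast_smul_eq_nsmul, Nat.cast_smul_eq_nsmul,
      Nat.cast_smul_eq_nsmul, Nat.cast_smul_eq_nsmul]
    exact h.symm
  -- nonzero scalars
  have hmC : (m:ℂ) ≠ 0 := Nat.cast_ne_zero.mpr hm.ne'
  have hnC : (n:ℂ) ≠ 0 := Nat.cast_ne_zero.mpr hn.ne'
  have hmnC : (m:ℂ) ≠ (n:ℂ) := fun h => hmn (Nat.cast_injective h)
  have hc1 : (2*(m:ℂ) + 2*(n:ℂ)) ≠ 0 := by
    have h : ((2*m+2*n : ℕ) : ℂ) ≠ 0 := Nat.cast_ne_zero.mpr (by omega)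
    intro h0; apply h; push_cast; linear_combination h0
  have hc2 : (2*(m:ℂ) - 2*(n:ℂ)) ≠ 0 := by
    intro h0; apply hmnC; linear_combination h0/2
  have hc3 : (2*(m:ℂ)) ≠ 0 := by
    intro h0; apply hmC; linear_combination h0/2
  have hc4 : (2*(n:ℂ)) ≠ 0 := by
    intro h0; apply hnC; linear_combination h0/2
  -- Step 1: δ P = 0 for the diagonal idempotent P = E₁₁
  have hδQ' : δ ((0:A),(0:M),(0:N),(1:B)) = -δ ((1:A),(0:M),(0:N),(0:B)) := by
    have h := hadd ((1:A),(0:M),(0:N),(0:B)) ((0:A),(0:M),(0:N),(1:B))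
    have hs : ((1:A),(0:M),(0:N),(0:B)) + ((0:A),(0:M),(0:N),(1:B)) = (1 : GMA A B M N) := by
      simp
    rw [hs, hδ1] at h
    exact eq_neg_of_add_eq_zero_right h.symm
  have hδP : δ ((1:A),(0:M),(0:N),(0:B)) = 0 := by
    have E := hG ((1:A),(0:M),(0:N),(0:B)) ((0:A),(0:M),(0:N),(1:B))
      (by simp [GMA.φ_zero_left, GMA.ψ_zero_left, Prod.mk_eq_zero])
      (by simp [GMA.φ_zero_left, GMA.ψ_zero_left, Prod.mk_eq_zero])
    rw [hδQ'] at E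
    rcases hdP : δ ((1:A),(0:M),(0:N),(0:B)) with ⟨pa, pu, pv, pb⟩
    rw [hdP] at E
    simp only [GMA.mul_def, Prod.neg_mk, Prod.mk_add_mk, Prod.smul_mk, Prod.mk_eq_zero,
      GMA.φ_zero_left, GMA.φ_zero_right, GMA.ψ_zero_left, GMA.ψ_zero_right,
      smul_zero, zero_smul, smul_neg, mul_zero, zero_mul, mul_one, one_mul,
      add_zero, zero_add, neg_zero, op_zero, op_one, one_smul] at E
    obtain ⟨eA, eM, eN, eB⟩ := E
    have hpa : pa = 0 := csmul_cancel₀ hc1 (by linear_combination (norm := module) -eA)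
    have hpu : pu = 0 := csmul_cancel₀ hc2 (by linear_combination (norm := module) eM)
    have hpv : pv = 0 := csmul_cancel₀ hc2 (by linear_combination (norm := module) -eN)
    have hpb : pb = 0 := csmul_cancel₀ hc1 (by linear_combination (norm := module) eB)
    simp [hpa, hpu, hpv, hpb, Prod.mk_eq_zero]
  have hδQ : δ ((0:A),(0:M),(0:N),(1:B)) = 0 := by rw [hδQ', hδP, neg_zero]
  -- Step 2: δ vanishes on the M-corner
  have hδM : ∀ x : M, δ ((0:A), x, (0:N), (0:B)) = 0 := by
    intro x
    rcases hd : δ ((0:A), x, (0:N), (0:B)) with ⟨da, du, dv, db⟩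
    have hnegW : ((0:A), -x, (0:N), (0:B)) = -((0:A), x, (0:N), (0:B)) := by simp
    have hPW : δ ((1:A), x, (0:N), (0:B)) = (da, du, dv, db) := by
      have h := hadd ((1:A),(0:M),(0:N),(0:B)) ((0:A), x, (0:N), (0:B))
      have hs : ((1:A),(0:M),(0:N),(0:B)) + ((0:A), x, (0:N), (0:B))
          = ((1:A), x, (0:N), (0:B)) := by simp
      rw [hs, hδP, hd, zero_add] at h
      exact h
    have hPW' : δ ((1:A), -x, (0:N), (0:B)) = -(da, du, dv, db) := by
      have h := hadd ((1:A),(0:M),(0:N),(0:B)) ((0:A), -x, (0:N), (0:B))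
      have hs : ((1:A),(0:M),(0:N),(0:B)) + ((0:A), -x, (0:N), (0:B))
          = ((1:A), -x, (0:N), (0:B)) := by simp
      rw [hs, hδP, hnegW, hneg, hd, zero_add] at h
      exact h
    have hQW : δ ((0:A), x, (0:N), (1:B)) = (da, du, dv, db) := by
      have h := hadd ((0:A),(0:M),(0:N),(1:B)) ((0:A), x, (0:N), (0:B))
      have hs : ((0:A),(0:M),(0:N),(1:B)) + ((0:A), x, (0:N), (0:B))
          = ((0:A), x, (0:N), (1:B)) := by simp
      rw [hs, hδQ, hd, zero_add] at h
      exact h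
    have hQW' : δ ((0:A), -x, (0:N), (1:B)) = -(da, du, dv, db) := by
      have h := hadd ((0:A),(0:M),(0:N),(1:B)) ((0:A), -x, (0:N), (0:B))
      have hs : ((0:A),(0:M),(0:N),(1:B)) + ((0:A), -x, (0:N), (0:B))
          = ((0:A), -x, (0:N), (1:B)) := by simp
      rw [hs, hδQ, hnegW, hneg, hd, zero_add] at h
      exact h
    have E1 := hG ((1:A), x, (0:N), (0:B)) ((0:A), -x, (0:N), (1:B))
      (by simp [GMA.φ_zero_left, GMA.φ_zero_right, GMA.ψ_zero_left, GMA.ψ_zero_right,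
        Prod.mk_eq_zero])
      (by simp [GMA.φ_zero_left, GMA.φ_zero_right, GMA.ψ_zero_left, GMA.ψ_zero_right,
        Prod.mk_eq_zero])
    have E2 := hG ((1:A), -x, (0:N), (0:B)) ((0:A), x, (0:N), (1:B))
      (by simp [GMA.φ_zero_left, GMA.φ_zero_right, GMA.ψ_zero_left, GMA.ψ_zero_right,
        Prod.mk_eq_zero])
      (by simp [GMA.φ_zero_left, GMA.φ_zero_right, GMA.ψ_zero_left, GMA.ψ_zero_right,
        Prod.mk_eq_zero])
    rw [hPW, hQW'] at E1
    rw [hPW', hQW] at E2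
    simp only [GMA.mul_def, Prod.neg_mk, Prod.mk_add_mk, Prod.smul_mk, Prod.mk_eq_zero,
      GMA.φ_zero_left, GMA.φ_zero_right, GMA.ψ_zero_left, GMA.ψ_zero_right,
      smul_zero, zero_smul, smul_neg, mul_zero, zero_mul, mul_one, one_mul,
      add_zero, zero_add, neg_zero, op_zero, op_one, one_smul, neg_neg,
      GMA.φ, GMA.ψ, map_neg, AddMonoidHom.neg_apply, mul_neg, neg_mul,
      neg_smul, op_neg] at E1 E2
    obtain ⟨eA1, eM1, eN1, eB1⟩ := E1
    obtain ⟨eA2, eM2, eN2, eB2⟩ := E2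
    have hda : da = 0 := csmul_cancel₀ hc1
      (by linear_combination (norm := module) ((1:ℂ)/2) • eA2 - ((1:ℂ)/2) • eA1)
    have hdu : du = 0 := by
      refine csmul_cancel₀ hc2 ?_
      generalize hw1 : da • x = w1 at eM1 eM2
      generalize hw2 : MulOpposite.op db • x = w2 at eM1 eM2
      linear_combination (norm := module) ((1:ℂ)/2) • eM1 - ((1:ℂ)/2) • eM2
    have hdv : dv = 0 := csmul_cancel₀ hc2
      (by linear_combination (norm := module) -eN1)
    have hdb : db = 0 := csmul_cancel₀ hc1
      (by linear_combination (norm := module) ((1:ℂ)/2) • eB1 - ((1:ℂ)/2) • eB2)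
    simp [hda, hdu, hdv, hdb, Prod.mk_eq_zero]
  -- Step 3: δ vanishes on the N-corner
  have hδN : ∀ y : N, δ ((0:A), (0:M), y, (0:B)) = 0 := by
    intro y
    rcases hd : δ ((0:A), (0:M), y, (0:B)) with ⟨da, du, dv, db⟩
    have hnegV : ((0:A), (0:M), -y, (0:B)) = -((0:A), (0:M), y, (0:B)) := by simp
    have hQV : δ ((0:A), (0:M), y, (1:B)) = (da, du, dv, db) := by
      have h := hadd ((0:A),(0:M),(0:N),(1:B)) ((0:A), (0:M), y, (0:B))
      have hs : ((0:A),(0:M),(0:N),(1:B)) + ((0:A), (0:M), y, (0:B))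
          = ((0:A), (0:M), y, (1:B)) := by simp
      rw [hs, hδQ, hd, zero_add] at h
      exact h
    have hQV' : δ ((0:A), (0:M), -y, (1:B)) = -(da, du, dv, db) := by
      have h := hadd ((0:A),(0:M),(0:N),(1:B)) ((0:A), (0:M), -y, (0:B))
      have hs : ((0:A),(0:M),(0:N),(1:B)) + ((0:A), (0:M), -y, (0:B))
          = ((0:A), (0:M), -y, (1:B)) := by simp
      rw [hs, hδQ, hnegV, hneg, hd, zero_add] at h
      exact h
    have hPV : δ ((1:A), (0:M), y, (0:B)) = (da, du, dv, db) := by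
      have h := hadd ((1:A),(0:M),(0:N),(0:B)) ((0:A), (0:M), y, (0:B))
      have hs : ((1:A),(0:M),(0:N),(0:B)) + ((0:A), (0:M), y, (0:B))
          = ((1:A), (0:M), y, (0:B)) := by simp
      rw [hs, hδP, hd, zero_add] at h
      exact h
    have hPV' : δ ((1:A), (0:M), -y, (0:B)) = -(da, du, dv, db) := by
      have h := hadd ((1:A),(0:M),(0:N),(0:B)) ((0:A), (0:M), -y, (0:B))
      have hs : ((1:A),(0:M),(0:N),(0:B)) + ((0:A), (0:M), -y, (0:B))
          = ((1:A), (0:M), -y, (0:B)) := by simp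
      rw [hs, hδP, hnegV, hneg, hd, zero_add] at h
      exact h
    have E1 := hG ((0:A), (0:M), y, (1:B)) ((1:A), (0:M), -y, (0:B)) (by simp [GMA.φ_zero_left, GMA.φ_zero_right, GMA.ψ_zero_left, GMA.ψ_zero_right,
        Prod.mk_eq_zero]) (by simp [GMA.φ_zero_left, GMA.φ_zero_right, GMA.ψ_zero_left, GMA.ψ_zero_right,
        Prod.mk_eq_zero])
    have E2 := hG ((0:A), (0:M), -y, (1:B)) ((1:A), (0:M), y, (0:B)) (by simp [GMA.φ_zero_left, GMA.φ_zero_right, GMA.ψ_zero_left, GMA.ψ_zero_right,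
        Prod.mk_eq_zero]) (by simp [GMA.φ_zero_left, GMA.φ_zero_right, GMA.ψ_zero_left, GMA.ψ_zero_right,
        Prod.mk_eq_zero])
    rw [hQV, hPV'] at E1
    rw [hQV', hPV] at E2
    simp only [GMA.mul_def, Prod.neg_mk, Prod.mk_add_mk, Prod.smul_mk, Prod.mk_eq_zero,
      GMA.φ_zero_left, GMA.φ_zero_right, GMA.ψ_zero_left, GMA.ψ_zero_right,
      smul_zero, zero_smul, smul_neg, mul_zero, zero_mul, mul_one, one_mul,
      add_zero, zero_add, neg_zero, op_zero, op_one, one_smul, neg_neg,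
      GMA.φ, GMA.ψ, map_neg, AddMonoidHom.neg_apply, mul_neg, neg_mul,
      neg_smul, op_neg] at E1 E2
    obtain ⟨eA1, eM1, eN1, eB1⟩ := E1
    obtain ⟨eA2, eM2, eN2, eB2⟩ := E2
    have hda : da = 0 := csmul_cancel₀ hc1
      (by linear_combination (norm := module) ((1:ℂ)/2) • eA1 - ((1:ℂ)/2) • eA2)
    have hdu : du = 0 := csmul_cancel₀ hc2
      (by linear_combination (norm := module) -eM1)
    have hdv : dv = 0 := by
      refine csmul_cancel₀ hc2 ?_
      generalize hw1 : db • y = w1 at eN1 eN2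
      generalize hw2 : MulOpposite.op da • y = w2 at eN1 eN2
      linear_combination (norm := module) ((1:ℂ)/2) • eN1 - ((1:ℂ)/2) • eN2
    have hdb : db = 0 := csmul_cancel₀ hc1
      (by linear_combination (norm := module) ((1:ℂ)/2) • eB2 - ((1:ℂ)/2) • eB1)
    simp [hda, hdu, hdv, hdb, Prod.mk_eq_zero]
  -- Step 4: δ vanishes on the A-corner
  have hδA : ∀ a : A, δ (a, (0:M), (0:N), (0:B)) = 0 := by
    intro a
    rcases hd : δ (a, (0:M), (0:N), (0:B)) with ⟨ta, tu, tv, tb⟩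
    have E0 := hG (a, (0:M), (0:N), (0:B)) ((0:A),(0:M),(0:N),(1:B)) (by simp [GMA.φ_zero_left, GMA.φ_zero_right, GMA.ψ_zero_left, GMA.ψ_zero_right,
        Prod.mk_eq_zero]) (by simp [GMA.φ_zero_left, GMA.φ_zero_right, GMA.ψ_zero_left, GMA.ψ_zero_right,
        Prod.mk_eq_zero])
    rw [hδQ, hd] at E0
    simp only [GMA.mul_def, Prod.neg_mk, Prod.mk_add_mk, Prod.smul_mk, Prod.mk_eq_zero,
      GMA.φ_zero_left, GMA.φ_zero_right, GMA.ψ_zero_left, GMA.ψ_zero_right,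
      smul_zero, zero_smul, smul_neg, mul_zero, zero_mul, mul_one, one_mul,
      add_zero, zero_add, neg_zero, op_zero, op_one, one_smul, neg_neg,
      GMA.φ, GMA.ψ, map_neg, AddMonoidHom.neg_apply, mul_neg, neg_mul,
      neg_smul, op_neg] at E0
    obtain ⟨-, e0M, e0N, e0B⟩ := E0
    have htu : tu = 0 := csmul_cancel₀ hc3 e0M
    have htv : tv = 0 := csmul_cancel₀ hc4 e0N
    have htb : tb = 0 := csmul_cancel₀ hc1
      (by linear_combination (norm := module) e0B)
    subst htu htv htb
    have hta : ∀ x : M, ta • x = 0 := by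
      intro x
      have hdX : δ (a, -(a • x), (0:N), (0:B)) = (ta, 0, 0, 0) := by
        have h := hadd (a,(0:M),(0:N),(0:B)) ((0:A), -(a • x), (0:N), (0:B))
        have hs : (a,(0:M),(0:N),(0:B)) + ((0:A), -(a • x), (0:N), (0:B))
            = (a, -(a • x), (0:N), (0:B)) := by simp
        rw [hs, hd, hδM, add_zero] at h
        exact h
      have hdY : δ ((0:A), x, (0:N), (1:B)) = 0 := by
        have h := hadd ((0:A),(0:M),(0:N),(1:B)) ((0:A), x, (0:N), (0:B))
        have hs : ((0:A),(0:M),(0:N),(1:B)) + ((0:A), x, (0:N), (0:B))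
            = ((0:A), x, (0:N), (1:B)) := by simp
        rw [hs, hδQ, hδM, add_zero] at h
        exact h
      have E := hG (a, -(a • x), (0:N), (0:B)) ((0:A), x, (0:N), (1:B)) (by simp [GMA.φ_zero_left, GMA.φ_zero_right, GMA.ψ_zero_left, GMA.ψ_zero_right,
        Prod.mk_eq_zero]) (by simp [GMA.φ_zero_left, GMA.φ_zero_right, GMA.ψ_zero_left, GMA.ψ_zero_right,
        Prod.mk_eq_zero])
      rw [hdX, hdY] at E
      simp only [GMA.mul_def, Prod.neg_mk, Prod.mk_add_mk, Prod.smul_mk, Prod.mk_eq_zero,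
      GMA.φ_zero_left, GMA.φ_zero_right, GMA.ψ_zero_left, GMA.ψ_zero_right,
      smul_zero, zero_smul, smul_neg, mul_zero, zero_mul, mul_one, one_mul,
      add_zero, zero_add, neg_zero, op_zero, op_one, one_smul, neg_neg,
      GMA.φ, GMA.ψ, map_neg, AddMonoidHom.neg_apply, mul_neg, neg_mul,
      neg_smul, op_neg] at E
      exact csmul_cancel₀ hc3 E.2.1
    simp [hfaithL ta hta, Prod.mk_eq_zero]
  -- Step 5: δ vanishes on the B-corner
  have hδB : ∀ b : B, δ ((0:A), (0:M), (0:N), b) = 0 := by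
    intro b
    rcases hd : δ ((0:A), (0:M), (0:N), b) with ⟨sa, su, sv, sb⟩
    have E0 := hG ((0:A), (0:M), (0:N), b) ((1:A),(0:M),(0:N),(0:B)) (by simp [GMA.φ_zero_left, GMA.φ_zero_right, GMA.ψ_zero_left, GMA.ψ_zero_right,
        Prod.mk_eq_zero]) (by simp [GMA.φ_zero_left, GMA.φ_zero_right, GMA.ψ_zero_left, GMA.ψ_zero_right,
        Prod.mk_eq_zero])
    rw [hδP, hd] at E0
    simp only [GMA.mul_def, Prod.neg_mk, Prod.mk_add_mk, Prod.smul_mk, Prod.mk_eq_zero,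
      GMA.φ_zero_left, GMA.φ_zero_right, GMA.ψ_zero_left, GMA.ψ_zero_right,
      smul_zero, zero_smul, smul_neg, mul_zero, zero_mul, mul_one, one_mul,
      add_zero, zero_add, neg_zero, op_zero, op_one, one_smul, neg_neg,
      GMA.φ, GMA.ψ, map_neg, AddMonoidHom.neg_apply, mul_neg, neg_mul,
      neg_smul, op_neg] at E0
    obtain ⟨e0A, e0M, e0N, -⟩ := E0
    have hsa : sa = 0 := csmul_cancel₀ hc1
      (by linear_combination (norm := module) e0A)
    have hsu : su = 0 := csmul_cancel₀ hc4 e0M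
    have hsv : sv = 0 := csmul_cancel₀ hc3 e0N
    subst hsa hsu hsv
    have hsb : ∀ x : M, MulOpposite.op sb • x = 0 := by
      intro x
      have hdX : δ ((0:A), -(MulOpposite.op b • x), (0:N), b) = (0, 0, 0, sb) := by
        have h := hadd ((0:A),(0:M),(0:N),b) ((0:A), -(MulOpposite.op b • x), (0:N), (0:B))
        have hs : ((0:A),(0:M),(0:N),b) + ((0:A), -(MulOpposite.op b • x), (0:N), (0:B))
            = ((0:A), -(MulOpposite.op b • x), (0:N), b) := by simp
        rw [hs, hd, hδM, add_zero] at h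
        exact h
      have hdY : δ ((1:A), x, (0:N), (0:B)) = 0 := by
        have h := hadd ((1:A),(0:M),(0:N),(0:B)) ((0:A), x, (0:N), (0:B))
        have hs : ((1:A),(0:M),(0:N),(0:B)) + ((0:A), x, (0:N), (0:B))
            = ((1:A), x, (0:N), (0:B)) := by simp
        rw [hs, hδP, hδM, add_zero] at h
        exact h
      have E := hG ((0:A), -(MulOpposite.op b • x), (0:N), b) ((1:A), x, (0:N), (0:B)) (by simp [GMA.φ_zero_left, GMA.φ_zero_right, GMA.ψ_zero_left, GMA.ψ_zero_right,
        Prod.mk_eq_zero]) (by simp [GMA.φ_zero_left, GMA.φ_zero_right, GMA.ψ_zero_left, GMA.ψ_zero_right,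
        Prod.mk_eq_zero])
      rw [hdX, hdY] at E
      simp only [GMA.mul_def, Prod.neg_mk, Prod.mk_add_mk, Prod.smul_mk, Prod.mk_eq_zero,
      GMA.φ_zero_left, GMA.φ_zero_right, GMA.ψ_zero_left, GMA.ψ_zero_right,
      smul_zero, zero_smul, smul_neg, mul_zero, zero_mul, mul_one, one_mul,
      add_zero, zero_add, neg_zero, op_zero, op_one, one_smul, neg_neg,
      GMA.φ, GMA.ψ, map_neg, AddMonoidHom.neg_apply, mul_neg, neg_mul,
      neg_smul, op_neg] at E
      exact csmul_cancel₀ hc4 E.2.1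
    simp [hfaithR sb hsb, Prod.mk_eq_zero]
  -- Final assembly
  intro p
  obtain ⟨a, x, y, b⟩ := p
  have hs : (a, x, y, b) = (a,(0:M),(0:N),(0:B)) + ((0:A), x, (0:N), (0:B))
      + ((0:A),(0:M), y, (0:B)) + ((0:A),(0:M),(0:N), b) := by simp
  rw [hs, hadd, hadd, hadd, hδA, hδM, hδN, hδB]
  simp
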